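/- Let W be a group and S a subgroup with exactly k ≥ 2 distinct conjugates S₁ = S, S₂, …, S_k, and suppose the normal core C = S₁ ∩ ⋯ ∩ S_k has finite index in W. Let N = N_W(S₁) ∩ ⋯ ∩ N_W(S_k) and let T = S₂ ∩ ⋯ ∩ S_k (the intersection of all conjugates of S other than S itself). Then [W : C] ≥ [W : N] · [T : C]^k. -/

import Mathlib

/-- The set of all conjugates `wSw⁻¹` of a subgroup `S` of `W`. -/
def subgroupConjugates {W : Type*} [Group W] (S : Subgroup W) : Set (Subgroup W) :=
  Set.range fun w : W => Subgroup.map (MulAut.conj w).toMonoidHom S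

private lemma mem_map_cj {W : Type*} [Group W] (w x : W) (H : Subgroup W) :
    x ∈ H.map (MulAut.conj w).toMonoidHom ↔ w⁻¹ * x * w ∈ H := by
  rw [Subgroup.mem_map_equiv, MulAut.conj_symm_apply]

private lemma map_cj_map_cj {W : Type*} [Group W] (u v : W) (H : Subgroup W) :
    (H.map (MulAut.conj v).toMonoidHom).map (MulAut.conj u).toMonoidHom
      = H.map (MulAut.conj (u * v)).toMonoidHom := by
  rw [Subgroup.map_map]
  congr 1
  ext x
  simp [MulAut.conj_apply, mul_assoc]

private lemma map_cj_eq_iff_mem_normalizer {W : Type*} [Group W] (w : W) (H : Subgroup W) :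
    H.map (MulAut.conj w).toMonoidHom = H ↔ w ∈ Subgroup.normalizer (H : Set W) := by
  constructor
  · intro h
    rw [Subgroup.mem_normalizer_iff'']
    intro x
    have hx := mem_map_cj w x H
    rw [h] at hx
    exact hx
  · intro hw
    ext x
    rw [mem_map_cj]
    exact (Subgroup.mem_normalizer_iff''.mp hw x).symm

/-- Let `S 0, …, S (k-1)` (for `k ≥ 2`) be the distinct conjugates of the subgroup `S 0` of
`W`, and suppose the normal core `C = ⋂ i, S i` has finite index in `W`.  Let `N` be the
intersection of the normalizers of the `S i`, and let `T` be the intersection of all the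
conjugates other than `S 0` itself.  Then `[W : C] ≥ [W : N] · [T : C]^k`. -/
theorem core_index_ge {W : Type*} [Group W]
    (k : ℕ) (hk : 2 ≤ k)
    (S : Fin k → Subgroup W) (hinj : Function.Injective S)
    (hconj : Set.range S = subgroupConjugates (S ⟨0, by omega⟩))
    (C : Subgroup W) (hC : C = ⨅ i, S i)
    (N : Subgroup W) (hN : N = ⨅ i, Subgroup.normalizer (S i : Set W))
    (T : Subgroup W) (hT : T = ⨅ j ∈ ({(⟨0, by omega⟩ : Fin k)}ᶜ : Set (Fin k)), S j)
    (hCfin : C.FiniteIndex) :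
    N.index * (C.relIndex T) ^ k ≤ C.index := by
  classical
  have hk0 : 0 < k := by omega
  set z : Fin k := ⟨0, hk0⟩ with hzdef
  -- every conjugate of any `S i` is again some `S j`
  have hA : ∀ (w : W) (i : Fin k), ∃ j, (S i).map (MulAut.conj w).toMonoidHom = S j := by
    intro w i
    have hi : S i ∈ subgroupConjugates (S z) := by
      rw [← hconj]; exact ⟨i, rfl⟩
    obtain ⟨u, hu⟩ := Set.mem_range.mp hi
    have hmem : (S i).map (MulAut.conj w).toMonoidHom ∈ subgroupConjugates (S z) := by
      refine ⟨w * u, ?_⟩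
      show Subgroup.map (MulAut.conj (w * u)).toMonoidHom (S z)
        = (S i).map (MulAut.conj w).toMonoidHom
      rw [← map_cj_map_cj, hu]
    rw [← hconj] at hmem
    obtain ⟨j, hj⟩ := Set.mem_range.mp hmem
    exact ⟨j, hj.symm⟩
  choose σ hσ using hA
  have hσinj : ∀ w, Function.Injective (σ w) := by
    intro w i i' h
    apply hinj
    apply Subgroup.map_injective (f := (MulAut.conj w).toMonoidHom) (MulAut.conj w).injective
    rw [hσ w i, hσ w i', h]
  have hσsurj : ∀ w, Function.Surjective (σ w) :=
    fun w => Finite.surjective_of_injective (hσinj w)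
  have hmemC : ∀ x, x ∈ C ↔ ∀ i, x ∈ S i := by
    intro x; rw [hC]; simp [Subgroup.mem_iInf]
  have hCle : ∀ i, C ≤ S i := fun i => hC ▸ iInf_le _ i
  have hCnormal : C.Normal := by
    constructor
    intro n hn g
    rw [hmemC] at hn ⊢
    intro i
    obtain ⟨j, hj⟩ := hσsurj g i
    have h1 : g * n * g⁻¹ ∈ (S j).map (MulAut.conj g).toMonoidHom := by
      rw [mem_map_cj]
      have he : g⁻¹ * (g * n * g⁻¹) * g = n := by group
      rw [he]; exact hn j
    rwa [hσ g j, hj] at h1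
  have hmemN : ∀ w, w ∈ N ↔ ∀ i, (S i).map (MulAut.conj w).toMonoidHom = S i := by
    intro w
    rw [hN, Subgroup.mem_iInf]
    exact forall_congr' fun i => (map_cj_eq_iff_mem_normalizer w (S i)).symm
  -- the intersections of all conjugates except one
  set Ti : Fin k → Subgroup W := fun i => ⨅ j ∈ ({i}ᶜ : Set (Fin k)), S j with hTidef
  have hmemTi : ∀ (i : Fin k) (x : W), x ∈ Ti i ↔ ∀ j, j ≠ i → x ∈ S j := by
    intro i x
    simp [hTidef, Subgroup.mem_iInf]
  have hTz : T = Ti z := hT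
  have hTiN : ∀ i, Ti i ≤ N := by
    intro i t ht
    rw [hmemN]
    have hfix : ∀ j, j ≠ i → σ t j = j := by
      intro j hj
      apply hinj
      rw [← hσ t j]
      exact (map_cj_eq_iff_mem_normalizer t (S j)).mpr
        (Subgroup.le_normalizer ((hmemTi i t).mp ht j hj))
    have hfixi : σ t i = i := by
      by_contra hne
      exact hne (hσinj t (hfix (σ t i) hne))
    intro j
    rw [hσ t j]
    by_cases hji : j = i
    · subst hji; rw [hfixi]
    · rw [hfix j hji]
  have hcomm_mem : ∀ i j, i ≠ j → ∀ a ∈ Ti i, ∀ b ∈ Ti j, a * b * a⁻¹ * b⁻¹ ∈ C := by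
    intro i j hij a ha b hb
    rw [hmemC]
    intro m
    by_cases hmj : m = j
    · subst hmj
      have h1 : a ∈ S m := (hmemTi i a).mp ha m hij.symm
      have hbN : b ∈ N := hTiN m hb
      have h2 : b * a⁻¹ * b⁻¹ ∈ S m := by
        rw [← (hmemN b).mp hbN m, mem_map_cj]
        have he : b⁻¹ * (b * a⁻¹ * b⁻¹) * b = a⁻¹ := by group
        rw [he]; exact inv_mem h1
      have h3 := mul_mem h1 h2
      have he : a * (b * a⁻¹ * b⁻¹) = a * b * a⁻¹ * b⁻¹ := by group
      rwa [he] at h3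
    · have hb1 : b ∈ S m := (hmemTi j b).mp hb m hmj
      have haN : a ∈ N := hTiN i ha
      have h2 : a * b * a⁻¹ ∈ S m := by
        rw [← (hmemN a).mp haN m, mem_map_cj]
        have he : a⁻¹ * (a * b * a⁻¹) * a = b := by group
        rw [he]; exact hb1
      exact mul_mem h2 (inv_mem hb1)
  have hTiSi : ∀ i, Ti i ⊓ S i ≤ C := by
    intro i x hx
    rw [hmemC]
    intro m
    rcases eq_or_ne m i with rfl | h
    · exact hx.2
    · exact (hmemTi i x).mp hx.1 m h
  -- move to the quotient by C
  haveI := hCnormal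
  set π : W →* W ⧸ C := QuotientGroup.mk' C with hπdef
  have hπker : π.ker = C := QuotientGroup.ker_mk' C
  set Tb : Fin k → Subgroup (W ⧸ C) := fun i => (Ti i).map π with hTbdef
  set Nb : Subgroup (W ⧸ C) := N.map π with hNbdef
  have hfinQ : Finite (W ⧸ C) := by
    apply Nat.finite_of_card_ne_zero
    exact hCfin.index_ne_zero
  have hTbS : ∀ i, Tb i ⊓ (S i).map π = ⊥ := by
    intro i
    rw [eq_bot_iff]
    rintro x ⟨hx1, hx2⟩
    obtain ⟨t, ht, rfl⟩ := hx1
    obtain ⟨s, hs, hes⟩ := hx2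
    obtain ⟨cc, hcc, hsc⟩ := (QuotientGroup.mk'_eq_mk' (N := C)).mp hes
    have htS : t ∈ S i := hsc ▸ mul_mem hs (hCle i hcc)
    have htC : t ∈ C := hTiSi i ⟨ht, htS⟩
    rw [Subgroup.mem_bot]
    exact (QuotientGroup.eq_one_iff t).mpr htC
  have hind : iSupIndep Tb := by
    intro i
    have hle : (⨆ j, ⨆ _ : j ≠ i, Tb j) ≤ (S i).map π := by
      refine iSup_le fun j => iSup_le fun hj => Subgroup.map_mono ?_
      intro x hx
      exact (hmemTi j x).mp hx i (Ne.symm hj)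
    exact Disjoint.mono_right hle (disjoint_iff.mpr (hTbS i))
  have hcommb : Pairwise fun i j =>
      ∀ (x : Tb i) (y : Tb j), Commute ((Tb i).subtype x) ((Tb j).subtype y) := by
    intro i j hij x y
    obtain ⟨a, ha, hax⟩ := x.2
    obtain ⟨b, hb, hby⟩ := y.2
    have hc := hcomm_mem i j hij a ha b hb
    have h1 : π (a * b * a⁻¹ * b⁻¹) = 1 := (QuotientGroup.eq_one_iff _).mpr hc
    simp only [map_mul, map_inv] at h1
    rw [hax, hby] at h1
    rw [mul_inv_eq_one, mul_inv_eq_iff_eq_mul] at h1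
    exact h1
  set φ := MonoidHom.noncommPiCoprod (fun i => (Tb i).subtype) hcommb with hφdef
  have hφinj : Function.Injective φ := by
    apply MonoidHom.injective_noncommPiCoprod_of_iSupIndep
    · simpa only [Subgroup.range_subtype] using hind
    · exact fun i => Subgroup.subtype_injective _
  have hφrange : ∀ x, φ x ∈ Nb := by
    intro x
    have h1 : φ x ∈ φ.range := ⟨x, rfl⟩
    rw [hφdef, MonoidHom.noncommPiCoprod_range] at h1
    have h2 : (⨆ i, ((Tb i).subtype).range) ≤ Nb := by
      refine iSup_le fun i => ?_
      rw [Subgroup.range_subtype]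
      exact Subgroup.map_mono (hTiN i)
    exact h2 h1
  have hcard1 : Nat.card (∀ i, Tb i) ≤ Nat.card Nb := by
    exact Nat.card_le_card_of_injective (fun x => (⟨φ x, hφrange x⟩ : Nb))
      (fun a b hab => hφinj (congrArg Subtype.val hab))
  -- all the `Tb i` have the same cardinality, namely `C.relIndex T`
  have hcardTb : ∀ i, Nat.card (Tb i) = C.relIndex T := by
    intro i
    have hi : S i ∈ subgroupConjugates (S z) := by
      rw [← hconj]; exact ⟨i, rfl⟩
    obtain ⟨u, hu⟩ := Set.mem_range.mp hi
    have hσu : σ u z = i := by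
      apply hinj
      rw [← hσ u z]
      exact hu
    have hTmap : (Ti z).map (MulAut.conj u).toMonoidHom = Ti i := by
      ext x
      rw [mem_map_cj, hmemTi z (u⁻¹ * x * u), hmemTi i x]
      constructor
      · intro h m hm
        obtain ⟨j, hj⟩ := hσsurj u m
        have hjz : j ≠ z := by
          intro h'; subst h'
          rw [hσu] at hj
          exact hm hj.symm
        have hx : x ∈ (S j).map (MulAut.conj u).toMonoidHom :=
          (mem_map_cj u x (S j)).mpr (h j hjz)
        rwa [hσ u j, hj] at hx
      · intro h j hjz
        have hm : σ u j ≠ i := fun he => hjz (hσinj u (he.trans hσu.symm))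
        have hx : x ∈ S (σ u j) := h _ hm
        rw [← hσ u j] at hx
        exact (mem_map_cj u x (S j)).mp hx
    have hq : Tb i = (Tb z).map (MulAut.conj (π u)).toMonoidHom := by
      have hcompeq : π.comp (MulAut.conj u).toMonoidHom
          = ((MulAut.conj (π u)).toMonoidHom).comp π := by
        ext x
        simp [MulAut.conj_apply]
      calc Tb i = ((Ti z).map (MulAut.conj u).toMonoidHom).map π := by
            rw [hTbdef]; simp only [hTmap]
        _ = (Ti z).map (π.comp (MulAut.conj u).toMonoidHom) := by rw [Subgroup.map_map]
        _ = (Ti z).map (((MulAut.conj (π u)).toMonoidHom).comp π) := by rw [hcompeq]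
        _ = (Tb z).map (MulAut.conj (π u)).toMonoidHom := by
            rw [hTbdef]; rw [Subgroup.map_map]
    have hcardeq : Nat.card (Tb i) = Nat.card (Tb z) := by
      rw [hq]
      exact (Nat.card_congr
        (Subgroup.equivMapOfInjective (Tb z) _ (MulAut.conj (π u)).injective).toEquiv).symm
    have h2 : C.relIndex (Ti z) = Nat.card (Tb z) := by
      have := Subgroup.relIndex_ker (K := Ti z) π
      rwa [hπker] at this
    rw [hcardeq, ← h2, hTz]
  have hNbcard : Nat.card Nb = C.relIndex N := by
    have := Subgroup.relIndex_ker (K := N) π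
    rw [hπker] at this
    exact this.symm
  have hCleN : C ≤ N := by
    rw [hN]
    exact le_iInf fun i => (hCle i).trans Subgroup.le_normalizer
  have hmul : C.relIndex N * N.index = C.index := Subgroup.relIndex_mul_index hCleN
  have hprod : ∏ i : Fin k, Nat.card (Tb i) = (C.relIndex T) ^ k := by
    simp [hcardTb, Finset.prod_const]
  have hle2 : (C.relIndex T) ^ k ≤ C.relIndex N := by
    rw [← hNbcard, ← hprod, ← Nat.card_pi]
    exact hcard1
  calc N.index * (C.relIndex T) ^ k ≤ N.index * C.relIndex N :=
        Nat.mul_le_mul_left _ hle2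
    _ = C.index := by rw [mul_comm]; exact hmul
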